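/- Geodesic midpoint concavity of the new formulation: let B_j ∈ R^{n_j × n} (j in [m]) each have full row rank and p_j ≥ 0, and define F(X) := log det(X) − Σ_j p_j log det(B_j X B_j^T) for X positive definite. Then for all positive definite X, Y: F(X # Y) ≥ (1/2) F(X) + (1/2) F(Y). -/

import Mathlib

set_option maxHeartbeats 1600000


open Matrix

/-- Real power of a matrix via the spectral decomposition (defined for Hermitian input). -/
noncomputable def mpow {d : ℕ} (A : Matrix (Fin d) (Fin d) ℝ) (t : ℝ) : Matrix (Fin d) (Fin d) ℝ :=
  if hA : A.IsHermitian then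
    (hA.eigenvectorUnitary : Matrix (Fin d) (Fin d) ℝ) *
      Matrix.diagonal (fun i => hA.eigenvalues i ^ t) *
      star (hA.eigenvectorUnitary : Matrix (Fin d) (Fin d) ℝ)
  else A

variable {d : ℕ} {A : Matrix (Fin d) (Fin d) ℝ}

lemma mpow_eq (hA : A.IsHermitian) (t : ℝ) :
    mpow A t = (hA.eigenvectorUnitary : Matrix (Fin d) (Fin d) ℝ) *
      Matrix.diagonal (fun i => hA.eigenvalues i ^ t) *
      star (hA.eigenvectorUnitary : Matrix (Fin d) (Fin d) ℝ) := dif_pos hA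

lemma U_mul_star (hA : A.IsHermitian) :
    (hA.eigenvectorUnitary : Matrix (Fin d) (Fin d) ℝ) *
      star (hA.eigenvectorUnitary : Matrix (Fin d) (Fin d) ℝ) = 1 :=
  (Matrix.mem_unitaryGroup_iff).mp hA.eigenvectorUnitary.2

lemma star_mul_U (hA : A.IsHermitian) :
    star (hA.eigenvectorUnitary : Matrix (Fin d) (Fin d) ℝ) *
      (hA.eigenvectorUnitary : Matrix (Fin d) (Fin d) ℝ) = 1 :=
  (Matrix.mem_unitaryGroup_iff').mp hA.eigenvectorUnitary.2

lemma mpow_mul_mpow (hA : A.PosDef) (s t : ℝ) :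
    mpow A s * mpow A t = mpow A (s + t) := by
  set U := (hA.1.eigenvectorUnitary : Matrix (Fin d) (Fin d) ℝ) with hU
  rw [mpow_eq hA.1 s, mpow_eq hA.1 t, mpow_eq hA.1 (s + t), ← hU]
  have hd : Matrix.diagonal (fun i => hA.1.eigenvalues i ^ s) *
      Matrix.diagonal (fun i => hA.1.eigenvalues i ^ t) =
      Matrix.diagonal (fun i => hA.1.eigenvalues i ^ (s + t)) := by
    rw [Matrix.diagonal_mul_diagonal]
    exact congrArg _ (funext fun i => (Real.rpow_add (hA.eigenvalues_pos i) s t).symm)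
  have h1 : U * Matrix.diagonal (fun i => hA.1.eigenvalues i ^ s) * star U *
      (U * Matrix.diagonal (fun i => hA.1.eigenvalues i ^ t) * star U) =
      U * Matrix.diagonal (fun i => hA.1.eigenvalues i ^ s) * ((star U * U) *
      (Matrix.diagonal (fun i => hA.1.eigenvalues i ^ t) * star U)) := by
    simp only [Matrix.mul_assoc]
  rw [h1, star_mul_U hA.1, Matrix.one_mul, ← Matrix.mul_assoc, Matrix.mul_assoc U, hd]

lemma mpow_zero (hA : A.IsHermitian) : mpow A 0 = 1 := by
  rw [mpow_eq hA]
  simp [Matrix.diagonal_one, U_mul_star hA]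

lemma mpow_one (hA : A.IsHermitian) : mpow A 1 = A := by
  rw [mpow_eq hA]
  simp only [Real.rpow_one]
  exact (hA.spectral_theorem).symm

lemma posDef_conj_rect {k : ℕ} {M : Matrix (Fin d) (Fin d) ℝ} (hM : M.PosDef)
    (C : Matrix (Fin k) (Fin d) ℝ) (hC : ∀ x : Fin k → ℝ, x ≠ 0 → Cᴴ *ᵥ x ≠ 0) :
    (C * M * Cᴴ).PosDef := by
  rw [Matrix.posDef_iff_dotProduct_mulVec]
  constructor
  · simp only [Matrix.IsHermitian, Matrix.conjTranspose_mul, Matrix.conjTranspose_conjTranspose,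
      hM.1.eq, Matrix.mul_assoc]
  · intro x hx
    have key : dotProduct (star x) ((C * M * Cᴴ) *ᵥ x)
        = dotProduct (star (Cᴴ *ᵥ x)) (M *ᵥ (Cᴴ *ᵥ x)) := by
      rw [show (C * M * Cᴴ) *ᵥ x = C *ᵥ (M *ᵥ (Cᴴ *ᵥ x)) by
          simp [Matrix.mulVec_mulVec, Matrix.mul_assoc],
        Matrix.dotProduct_mulVec, star_mulVec, Matrix.conjTranspose_conjTranspose]
    rw [key]
    exact hM.dotProduct_mulVec_pos (hC x hx)

lemma mpow_posDef (hA : A.PosDef) (t : ℝ) : (mpow A t).PosDef := by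
  rw [mpow_eq hA.1, Matrix.star_eq_conjTranspose]
  refine posDef_conj_rect ?_ _ ?_
  · exact Matrix.posDef_diagonal_iff.mpr fun i => Real.rpow_pos_of_pos (hA.eigenvalues_pos i) t
  · intro x hx h0
    apply hx
    have h1 := U_mul_star hA.1
    rw [Matrix.star_eq_conjTranspose, Matrix.conjTranspose_eq_transpose_of_trivial] at h1
    have := congrArg (fun v => (hA.1.eigenvectorUnitary : Matrix (Fin d) (Fin d) ℝ) *ᵥ v) h0
    simpa [Matrix.mulVec_mulVec, h1] using this

lemma mpow_isHermitian (hA : A.IsHermitian) (t : ℝ) : (mpow A t).IsHermitian := by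
  rw [mpow_eq hA, Matrix.star_eq_conjTranspose, Matrix.IsHermitian]
  simp only [Matrix.conjTranspose_mul, Matrix.conjTranspose_conjTranspose,
    Matrix.diagonal_conjTranspose, Matrix.mul_assoc, Pi.star_def, star_trivial]

lemma det_mpow (hA : A.PosDef) (t : ℝ) : (mpow A t).det = A.det ^ t := by
  rw [mpow_eq hA.1, Matrix.det_mul_comm, ← Matrix.mul_assoc, star_mul_U hA.1, Matrix.one_mul,
    Matrix.det_diagonal]
  rw [Real.finset_prod_rpow _ _ (fun i _ => (hA.eigenvalues_pos i).le) t]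
  congr 1
  have := hA.1.det_eq_prod_eigenvalues
  simpa using this.symm

lemma det_le_one {S : Matrix (Fin d) (Fin d) ℝ} (h1 : S.PosSemidef)
    (h2 : (1 - S).PosSemidef) : S.det ≤ 1 := by
  have hev : ∀ i, h1.1.eigenvalues i ≤ 1 := by
    intro i
    set v : Fin d → ℝ := ⇑(h1.1.eigenvectorBasis i) with hvdef
    have hv : S *ᵥ v = h1.1.eigenvalues i • v := h1.1.mulVec_eigenvectorBasis i
    have hvne : v ≠ 0 := fun h => h1.1.eigenvectorBasis.orthonormal.ne_zero i
      (by rw [← WithLp.ofLp_eq_zero]; exact h)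
    have hvv : 0 < v ⬝ᵥ v := by
      rcases lt_or_eq_of_le (Finset.sum_nonneg fun j _ => mul_self_nonneg (v j) :
        (0:ℝ) ≤ v ⬝ᵥ v) with h | h
      · exact h
      · exact absurd (dotProduct_self_eq_zero.mp h.symm) hvne
    have h0 := h2.dotProduct_mulVec_nonneg v
    rw [Matrix.sub_mulVec, Matrix.one_mulVec, hv, star_trivial,
      dotProduct_sub, dotProduct_smul, smul_eq_mul] at h0
    nlinarith
  have hnn := h1.eigenvalues_nonneg
  have hdet := h1.1.det_eq_prod_eigenvalues
  simp only [RCLike.ofReal_real_eq_id, id_eq] at hdet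
  rw [hdet]
  exact Finset.prod_le_one (fun i _ => hnn i) (fun i _ => hev i)

lemma mpow_half_mul_self (hA : A.PosDef) : mpow A (1/2) * mpow A (1/2) = A := by
  rw [mpow_mul_mpow hA]
  norm_num [mpow_one hA.1]

lemma mpow_half_mul_neg (hA : A.PosDef) : mpow A (1/2) * mpow A (-(1/2)) = 1 := by
  rw [mpow_mul_mpow hA]
  norm_num [mpow_zero hA.1]

lemma mpow_neg_mul_half (hA : A.PosDef) : mpow A (-(1/2)) * mpow A (1/2) = 1 := by
  rw [mpow_mul_mpow hA]
  norm_num [mpow_zero hA.1]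

lemma det_mul_sq_le {k : ℕ} (M : Matrix (Fin k) (Fin d) ℝ) (N : Matrix (Fin d) (Fin k) ℝ)
    (h1 : (M * Mᴴ).PosDef) (h2 : (Nᴴ * N).PosDef) :
    (M * N).det ^ 2 ≤ (M * Mᴴ).det * (Nᴴ * N).det := by
  set A1 := M * Mᴴ with hA1
  set A2 := Nᴴ * N with hA2
  set P := mpow A1 (-(1/2)) * M with hP
  set Q := N * mpow A2 (-(1/2)) with hQ
  have hRH1 : (mpow A1 (-(1/2))).IsHermitian := mpow_isHermitian h1.1 _
  have hRH2 : (mpow A2 (-(1/2))).IsHermitian := mpow_isHermitian h2.1 _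
  have hPP : P * Pᴴ = 1 := by
    rw [hP, Matrix.conjTranspose_mul, hRH1.eq]
    have e : mpow A1 (-(1/2)) * M * (Mᴴ * mpow A1 (-(1/2)))
        = mpow A1 (-(1/2)) * mpow A1 1 * mpow A1 (-(1/2)) := by
      rw [mpow_one h1.1]; simp only [hA1, Matrix.mul_assoc]
    rw [e, mpow_mul_mpow h1, mpow_mul_mpow h1]
    norm_num [mpow_zero h1.1]
  have hQQ : Qᴴ * Q = 1 := by
    rw [hQ, Matrix.conjTranspose_mul, hRH2.eq]
    have e : mpow A2 (-(1/2)) * Nᴴ * (N * mpow A2 (-(1/2)))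
        = mpow A2 (-(1/2)) * mpow A2 1 * mpow A2 (-(1/2)) := by
      rw [mpow_one h2.1]; simp only [hA2, Matrix.mul_assoc]
    rw [e, mpow_mul_mpow h2, mpow_mul_mpow h2]
    norm_num [mpow_zero h2.1]
  have hEE : (Q * Qᴴ) * (Q * Qᴴ) = Q * Qᴴ := by
    calc (Q * Qᴴ) * (Q * Qᴴ) = Q * ((Qᴴ * Q) * Qᴴ) := by simp only [Matrix.mul_assoc]
    _ = Q * Qᴴ := by rw [hQQ, Matrix.one_mul]
  have hE : (1 - Q * Qᴴ).PosSemidef := by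
    have h' : (1 - Q * Qᴴ)ᴴ = 1 - Q * Qᴴ := by
      simp [Matrix.conjTranspose_sub, Matrix.conjTranspose_mul]
    have expand : (1 - Q * Qᴴ) * (1 - Q * Qᴴ) = 1 - Q * Qᴴ - Q * Qᴴ + (Q * Qᴴ) * (Q * Qᴴ) := by
      noncomm_ring
    have : 1 - Q * Qᴴ = (1 - Q * Qᴴ)ᴴ * (1 - Q * Qᴴ) := by
      rw [h', expand, hEE]; abel
    rw [this]
    exact Matrix.posSemidef_conjTranspose_mul_self _
  have hS0 : ((P * Q) * (P * Q)ᴴ).PosSemidef := Matrix.posSemidef_self_mul_conjTranspose _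
  have h1m : (1 - (P * Q) * (P * Q)ᴴ).PosSemidef := by
    have e : P * (1 - Q * Qᴴ) * Pᴴ = 1 - (P * Q) * (P * Q)ᴴ := by
      rw [Matrix.mul_sub, Matrix.mul_one, Matrix.sub_mul, hPP]
      simp only [Matrix.conjTranspose_mul, Matrix.mul_assoc]
    exact e ▸ hE.mul_mul_conjTranspose_same P
  have hdetle := det_le_one hS0 h1m
  rw [Matrix.det_mul, Matrix.det_conjTranspose, star_trivial, ← sq] at hdetle
  -- factorization
  have e1 : mpow A1 (1/2) * P = M := by
    rw [hP, ← Matrix.mul_assoc, mpow_half_mul_neg h1, Matrix.one_mul]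
  have e2 : Q * mpow A2 (1/2) = N := by
    rw [hQ, Matrix.mul_assoc, mpow_neg_mul_half h2, Matrix.mul_one]
  have hfact : M * N = mpow A1 (1/2) * (P * Q) * mpow A2 (1/2) := by
    rw [← e1, ← e2]; simp only [Matrix.mul_assoc]
  have ha1 : (0:ℝ) < A1.det := h1.det_pos
  have ha2 : (0:ℝ) < A2.det := h2.det_pos
  have hd1 : (mpow A1 (1/2)).det ^ 2 = A1.det := by
    rw [det_mpow h1, ← Real.rpow_natCast (A1.det ^ ((1:ℝ)/2)) 2, ← Real.rpow_mul ha1.le]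
    norm_num
  have hd2 : (mpow A2 (1/2)).det ^ 2 = A2.det := by
    rw [det_mpow h2, ← Real.rpow_natCast (A2.det ^ ((1:ℝ)/2)) 2, ← Real.rpow_mul ha2.le]
    norm_num
  rw [hfact, Matrix.det_mul, Matrix.det_mul]
  calc ((mpow A1 (1/2)).det * (P * Q).det * (mpow A2 (1/2)).det) ^ 2
      = ((mpow A1 (1/2)).det ^ 2) * ((P * Q).det ^ 2) * ((mpow A2 (1/2)).det ^ 2) := by ring
    _ = A1.det * ((P * Q).det ^ 2) * A2.det := by rw [hd1, hd2]
    _ ≤ A1.det * 1 * A2.det :=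
        mul_le_mul_of_nonneg_right (mul_le_mul_of_nonneg_left hdetle ha1.le) ha2.le
    _ = A1.det * A2.det := by ring


/-- The geodesic `X #ₜ Y = X^{1/2} (X^{-1/2} Y X^{-1/2})^t X^{1/2}`. -/
noncomputable def geo {d : ℕ} (X Y : Matrix (Fin d) (Fin d) ℝ) (t : ℝ) : Matrix (Fin d) (Fin d) ℝ :=
  mpow X (1/2) * mpow (mpow X (-(1/2)) * Y * mpow X (-(1/2))) t * mpow X (1/2)

/-- The matrix geometric mean `X # Y`. -/
noncomputable def gmean {d : ℕ} (X Y : Matrix (Fin d) (Fin d) ℝ) : Matrix (Fin d) (Fin d) ℝ :=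
  geo X Y (1/2)

theorem stmt10 {n m : ℕ} (nj : Fin m → ℕ)
    (B : ∀ j : Fin m, Matrix (Fin (nj j)) (Fin n) ℝ) (p : Fin m → ℝ)
    (hrank : ∀ j, Function.Surjective (B j).mulVecLin)
    (hp : ∀ j, 0 ≤ p j)
    (F : Matrix (Fin n) (Fin n) ℝ → ℝ)
    (hF : ∀ X, F X = Real.log X.det - ∑ j, p j * Real.log (B j * X * (B j)ᵀ).det)
    (X Y : Matrix (Fin n) (Fin n) ℝ) (hX : X.PosDef) (hY : Y.PosDef) :
    F (gmean X Y) ≥ (1/2) * F X + (1/2) * F Y := by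
  set S := mpow X (1/2) with hSdef
  set Si := mpow X (-(1/2)) with hSidef
  set W := Si * Y * Si with hWdef
  set T := mpow W (1/2) with hTdef
  have hSH : Sᴴ = S := (mpow_isHermitian hX.1 _).eq
  have hSiH : Siᴴ = Si := (mpow_isHermitian hX.1 _).eq
  have hSSi : S * Si = 1 := mpow_half_mul_neg hX
  have hSiS : Si * S = 1 := mpow_neg_mul_half hX
  have hSS : S * S = X := mpow_half_mul_self hX
  -- cancellation lemmas
  have l1 : ∀ (k : ℕ) (C : Matrix (Fin n) (Fin k) ℝ), S * (Si * C) = C := fun k C => by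
    rw [← Matrix.mul_assoc, hSSi, Matrix.one_mul]
  have l2 : ∀ (k : ℕ) (C : Matrix (Fin n) (Fin k) ℝ), Si * (S * C) = C := fun k C => by
    rw [← Matrix.mul_assoc, hSiS, Matrix.one_mul]
  have hSinj : ∀ x : Fin n → ℝ, x ≠ 0 → Sᴴ *ᵥ x ≠ 0 := by
    intro x hx h0
    apply hx
    rw [hSH] at h0
    have := congrArg (fun v => Si *ᵥ v) h0
    simpa [Matrix.mulVec_mulVec, hSiS] using this
  have hSiinj : ∀ x : Fin n → ℝ, x ≠ 0 → Siᴴ *ᵥ x ≠ 0 := by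
    intro x hx h0
    apply hx
    rw [hSiH] at h0
    have := congrArg (fun v => S *ᵥ v) h0
    simpa [Matrix.mulVec_mulVec, hSSi] using this
  have hW : W.PosDef := by
    have := posDef_conj_rect hY Si hSiinj
    rwa [hSiH, ← hWdef] at this
  have hTH : Tᴴ = T := (mpow_isHermitian hW.1 _).eq
  have hTT : T * T = W := mpow_half_mul_self hW
  set Z := gmean X Y with hZdef
  have hZ : Z = S * T * S := by
    rw [hZdef]
    unfold gmean geo
    rw [← hSdef, ← hSidef, ← hWdef, ← hTdef]
  have hTpd : T.PosDef := by
    rw [hTdef]; exact mpow_posDef hW (1/2)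
  have hZpd : Z.PosDef := by
    have h := posDef_conj_rect hTpd S hSinj
    rw [hSH] at h
    rwa [hZ]
  have hZH : Zᴴ = Z := hZpd.1.eq
  have hXinv : X⁻¹ = Si * Si := by
    apply Matrix.inv_eq_right_inv
    rw [← hSS, Matrix.mul_assoc, ← Matrix.mul_assoc S Si Si, hSSi, Matrix.one_mul, hSSi]
  have hZXZ : Z * X⁻¹ * Z = Y := by
    rw [hZ, hXinv]
    simp only [Matrix.mul_assoc]
    rw [l2, l1]
    rw [show T * (T * S) = (T * T) * S from (Matrix.mul_assoc T T S).symm, hTT, hWdef]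
    simp only [Matrix.mul_assoc]
    rw [hSiS, Matrix.mul_one, l1]
  -- determinant of Z
  have hdetXpos := hX.det_pos
  have hdetYpos := hY.det_pos
  have hdS : S.det = X.det ^ ((1:ℝ)/2) := det_mpow hX _
  have hdSi : Si.det = X.det ^ (-((1:ℝ)/2)) := det_mpow hX _
  have hdT : T.det = W.det ^ ((1:ℝ)/2) := det_mpow hW _
  have hlogS : Real.log S.det = (1/2) * Real.log X.det := by
    rw [hdS, Real.log_rpow hdetXpos]
  have hlogSi : Real.log Si.det = -((1/2) * Real.log X.det) := by
    rw [hdSi, Real.log_rpow hdetXpos]; ring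
  have hlogT : Real.log T.det = (1/2) * Real.log W.det := by
    rw [hdT, Real.log_rpow hW.det_pos]
  have hlogW : Real.log W.det = Real.log Y.det - Real.log X.det := by
    have : W.det = Si.det * Y.det * Si.det := by
      rw [hWdef, Matrix.det_mul, Matrix.det_mul]
    have hSidetpos : 0 < Si.det := (mpow_posDef hX _).det_pos
    rw [this, Real.log_mul (mul_pos hSidetpos hdetYpos).ne' hSidetpos.ne',
      Real.log_mul hSidetpos.ne' hdetYpos.ne', hlogSi]
    ring
  have hSdetpos : 0 < S.det := (mpow_posDef hX _).det_pos
  have hTdetpos : 0 < T.det := (mpow_posDef hW _).det_pos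
  have hlogZ : Real.log Z.det = (1/2) * Real.log X.det + (1/2) * Real.log Y.det := by
    have : Z.det = S.det * T.det * S.det := by
      rw [hZ, Matrix.det_mul, Matrix.det_mul]
    rw [this, Real.log_mul (mul_pos hSdetpos hTdetpos).ne' hSdetpos.ne',
      Real.log_mul hSdetpos.ne' hTdetpos.ne', hlogS, hlogT, hlogW]
    ring
  -- per-index inequality
  have key : ∀ j, p j * Real.log (B j * Z * (B j)ᵀ).det ≤
      (1/2) * (p j * Real.log (B j * X * (B j)ᵀ).det)
      + (1/2) * (p j * Real.log (B j * Y * (B j)ᵀ).det) := by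
    intro j
    have hBt : (B j)ᵀ = (B j)ᴴ := (Matrix.conjTranspose_eq_transpose_of_trivial _).symm
    have hBinj : ∀ x : Fin (nj j) → ℝ, x ≠ 0 → (B j)ᴴ *ᵥ x ≠ 0 := by
      intro x hx h0
      apply hx
      obtain ⟨u, hu⟩ := hrank j x
      rw [Matrix.mulVecLin_apply] at hu
      rw [← hBt] at h0
      have h2 : ((B j)ᵀ *ᵥ x) ⬝ᵥ u = x ⬝ᵥ x := by
        rw [Matrix.mulVec_transpose, ← Matrix.dotProduct_mulVec, hu]
      have hxx : x ⬝ᵥ x = 0 := by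
        rw [← h2, h0, zero_dotProduct]
      exact dotProduct_self_eq_zero.mp hxx
    have hGX : ((B j) * X * (B j)ᴴ).PosDef := posDef_conj_rect hX (B j) hBinj
    have hGY : ((B j) * Y * (B j)ᴴ).PosDef := posDef_conj_rect hY (B j) hBinj
    have hGZ : ((B j) * Z * (B j)ᴴ).PosDef := posDef_conj_rect hZpd (B j) hBinj
    set M' := (B j) * S with hM'
    set N' := Si * Z * (B j)ᴴ with hN'
    have e0 : M' * N' = (B j) * Z * (B j)ᴴ := by
      rw [hM', hN']
      simp only [Matrix.mul_assoc]
      rw [l1]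
    have e1 : M' * M'ᴴ = (B j) * X * (B j)ᴴ := by
      rw [hM', Matrix.conjTranspose_mul, hSH, ← hSS]
      simp only [Matrix.mul_assoc]
    have e2 : N'ᴴ * N' = (B j) * Y * (B j)ᴴ := by
      rw [hN']
      simp only [Matrix.conjTranspose_mul, Matrix.conjTranspose_conjTranspose, hZH, hSiH]
      have hZXZ' : Z * (Si * (Si * (Z * (B j)ᴴ))) = Y * (B j)ᴴ := by
        have : Z * (Si * (Si * Z)) = Y := by
          rw [← hZXZ, hXinv]; simp only [Matrix.mul_assoc]
        rw [show Z * (Si * (Si * (Z * (B j)ᴴ))) = (Z * (Si * (Si * Z))) * (B j)ᴴ by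
          simp only [Matrix.mul_assoc], this]
      simp only [Matrix.mul_assoc]
      rw [hZXZ']
    have hcs := det_mul_sq_le M' N' (e1 ▸ hGX) (e2 ▸ hGY)
    rw [e0, e1, e2] at hcs
    have hgz := hGZ.det_pos
    have hgx := hGX.det_pos
    have hgy := hGY.det_pos
    have hlog2 : 2 * Real.log ((B j) * Z * (B j)ᴴ).det ≤
        Real.log ((B j) * X * (B j)ᴴ).det + Real.log ((B j) * Y * (B j)ᴴ).det := by
      have h1 : Real.log (((B j) * Z * (B j)ᴴ).det ^ 2) ≤
          Real.log (((B j) * X * (B j)ᴴ).det * ((B j) * Y * (B j)ᴴ).det) :=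
        Real.log_le_log (by positivity) hcs
      rw [Real.log_pow, Real.log_mul hgx.ne' hgy.ne'] at h1
      push_cast at h1
      linarith
    rw [hBt]
    calc p j * Real.log ((B j) * Z * (B j)ᴴ).det
        ≤ p j * ((1/2) * Real.log ((B j) * X * (B j)ᴴ).det
          + (1/2) * Real.log ((B j) * Y * (B j)ᴴ).det) :=
          mul_le_mul_of_nonneg_left (by linarith) (hp j)
      _ = (1/2) * (p j * Real.log ((B j) * X * (B j)ᴴ).det)
          + (1/2) * (p j * Real.log ((B j) * Y * (B j)ᴴ).det) := by ring
  have hsum : ∑ j, p j * Real.log (B j * Z * (B j)ᵀ).det ≤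
      (1/2) * ∑ j, p j * Real.log (B j * X * (B j)ᵀ).det
      + (1/2) * ∑ j, p j * Real.log (B j * Y * (B j)ᵀ).det := by
    calc ∑ j, p j * Real.log (B j * Z * (B j)ᵀ).det
        ≤ ∑ j, ((1/2) * (p j * Real.log (B j * X * (B j)ᵀ).det)
          + (1/2) * (p j * Real.log (B j * Y * (B j)ᵀ).det)) :=
          Finset.sum_le_sum fun j _ => key j
      _ = _ := by rw [Finset.sum_add_distrib, ← Finset.mul_sum, ← Finset.mul_sum]
  rw [hF, hF, hF]
  linarith [hsum, hlogZ]
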